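/- For every positive integer m and nonzero real λ, V_{m,λ}(n,0) = (−1)^n·(m+1)(2m+1)⋯((n−1)m+1) for all n ≥ 1, and V_{m,λ}(0,0) = 1, where V_{m,λ}(n,k) are the degenerate Whitney numbers of the first kind. -/

import Mathlib

open Finset

noncomputable def dff (lam x : ℝ) (n : ℕ) : ℝ := ∏ i ∈ Finset.range n, (x - i * lam)

noncomputable def drf (lam x : ℝ) (n : ℕ) : ℝ := ∏ i ∈ Finset.range n, (x + i * lam)

theorem stmt7 (m : ℕ) (hm : 1 ≤ m) (lam : ℝ) (hlam : lam ≠ 0) (V : ℕ → ℕ → ℝ)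
    (hV : ∀ (x : ℝ) (n : ℕ), (m : ℝ) ^ n * dff 1 x n =
      ∑ k ∈ Finset.range (n + 1), V n k * dff lam ((m : ℝ) * x + 1) k) :
    (∀ n : ℕ, 1 ≤ n →
      V n 0 = (-1 : ℝ) ^ n * ∏ i ∈ Finset.Icc 1 (n - 1), ((i : ℝ) * m + 1)) ∧
    V 0 0 = 1 := by
  have hm0 : (m : ℝ) ≠ 0 := by positivity
  have key : ∀ n : ℕ, V n 0 = (m : ℝ) ^ n * dff 1 (-1 / m) n := by
    intro n
    have h := hV (-1 / m) n
    have hx : (m : ℝ) * (-1 / m) + 1 = 0 := by field_simp; norm_num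
    rw [hx] at h
    have hz : ∀ k ∈ Finset.range (n + 1),
        V n k * dff lam 0 k = if k = 0 then V n 0 else 0 := by
      intro k _
      cases k with
      | zero => simp [dff]
      | succ j =>
        simp only [if_neg (Nat.succ_ne_zero j)]
        have : dff lam 0 (j + 1) = 0 := by
          apply Finset.prod_eq_zero (Finset.mem_range.mpr (Nat.succ_pos j))
          simp
        rw [this, mul_zero]
    rw [Finset.sum_congr rfl hz, Finset.sum_ite_eq' (Finset.range (n+1)) 0] at h
    simp at h
    linarith
  have key2 : ∀ n : ℕ, V n 0 = (-1 : ℝ) ^ n * ∏ i ∈ Finset.range n, ((i : ℝ) * m + 1) := by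
    intro n
    rw [key n, dff,
      show ((m : ℝ) ^ n) = ∏ _i ∈ Finset.range n, (m : ℝ) by simp,
      show ((-1 : ℝ) ^ n) = ∏ _i ∈ Finset.range n, (-1 : ℝ) by simp,
      ← Finset.prod_mul_distrib, ← Finset.prod_mul_distrib]
    apply Finset.prod_congr rfl
    intro i _
    field_simp
    ring
  constructor
  · intro n hn
    rw [key2 n]
    congr 1
    have h1 : Finset.range n = insert 0 (Finset.Icc 1 (n - 1)) := by
      ext x; simp; omega
    rw [h1, Finset.prod_insert (by simp)]
    simp
  · have := key2 0
    simpa using this
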